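/- Let A be a commutative ring, I a set, R = A[(X_i)_{i∈I}] the polynomial ring, and 𝔞, 𝔟 ⊆ R monomial ideals. Then √𝔞 = √𝔟 if and only if ⌊𝔞⌋ = ⌊𝔟⌋. (Lemma 2.05 b).) -/

import Mathlib

open MvPolynomial

/-- `suppInd μ` is the characteristic function of the support of `μ`,
so that `X^(suppInd μ) = ∏_{i : μ i > 0} X i`. -/
noncomputable def suppInd {I : Type v} (μ : I →₀ ℕ) : I →₀ ℕ :=
  μ.mapRange (fun n => if n = 0 then 0 else 1) (by simp)

/-- A monomial ideal of `A[(X_i)_{i ∈ I}]` is an ideal generated by a set of monomials. -/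
def IsMonomialIdeal {A : Type u} [CommRing A] {I : Type v}
    (𝔞 : Ideal (MvPolynomial I A)) : Prop :=
  ∃ E : Set (I →₀ ℕ), 𝔞 = Ideal.span ((fun μ => monomial μ (1 : A)) '' E)

/-- `⌊𝔞⌋` is the ideal generated by the monomials `X^(suppInd μ)` for all monomials
`X^μ ∈ 𝔞`. -/
noncomputable def mvFloor {A : Type u} [CommRing A] {I : Type v}
    (𝔞 : Ideal (MvPolynomial I A)) : Ideal (MvPolynomial I A) :=
  Ideal.span {f | ∃ μ : I →₀ ℕ, monomial μ (1 : A) ∈ 𝔞 ∧ f = monomial (suppInd μ) (1 : A)}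

lemma suppInd_apply {I : Type v} (μ : I →₀ ℕ) (i : I) :
    suppInd μ i = if μ i = 0 then 0 else 1 := by
  simp [suppInd]

lemma suppInd_le {I : Type v} (μ : I →₀ ℕ) : suppInd μ ≤ μ := by
  intro i
  rw [suppInd_apply]
  split <;> omega

lemma suppInd_smul_suppInd {I : Type v} (μ : I →₀ ℕ) (n : ℕ) (hn : n ≠ 0) :
    suppInd (n • suppInd μ) = suppInd μ := by
  ext i
  simp only [suppInd_apply, Finsupp.smul_apply, smul_eq_mul]
  rcases eq_or_ne (μ i) 0 with h | h <;> simp [h, hn]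

lemma le_smul_suppInd {I : Type v} (μ : I →₀ ℕ) :
    μ ≤ ((μ.sum fun _ v => v) + 1) • suppInd μ := by
  intro i
  simp only [Finsupp.smul_apply, smul_eq_mul, suppInd_apply]
  rcases eq_or_ne (μ i) 0 with h | h
  · simp [h]
  · have hi : i ∈ μ.support := Finsupp.mem_support_iff.2 h
    have : μ i ≤ μ.sum fun _ v => v := by
      rw [Finsupp.sum]
      exact Finset.single_le_sum (fun j _ => Nat.zero_le _) hi
    rw [if_neg h, mul_one]
    omega

lemma monomial_mem_of_le {A : Type u} [CommRing A] {I : Type v}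
    {𝔞 : Ideal (MvPolynomial I A)} {μ ν : I →₀ ℕ} (hle : μ ≤ ν)
    (h : monomial μ (1 : A) ∈ 𝔞) : monomial ν (1 : A) ∈ 𝔞 := by
  have : monomial ν (1 : A) = monomial μ 1 * monomial (ν - μ) 1 := by
    rw [monomial_mul, one_mul, add_tsub_cancel_of_le hle]
  rw [this]
  exact Ideal.mul_mem_right _ _ h

lemma suppInd_mem_radical {A : Type u} [CommRing A] {I : Type v}
    {𝔞 : Ideal (MvPolynomial I A)} {μ : I →₀ ℕ}
    (h : monomial μ (1 : A) ∈ 𝔞) : monomial (suppInd μ) (1 : A) ∈ 𝔞.radical := by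
  refine ⟨(μ.sum fun _ v => v) + 1, ?_⟩
  rw [monomial_pow, one_pow]
  exact monomial_mem_of_le (le_smul_suppInd μ) h

lemma floor_le_radical {A : Type u} [CommRing A] {I : Type v}
    (𝔞 : Ideal (MvPolynomial I A)) : mvFloor 𝔞 ≤ 𝔞.radical := by
  rw [mvFloor, Ideal.span_le]
  rintro f ⟨μ, hμ, rfl⟩
  exact suppInd_mem_radical hμ

lemma le_floor {A : Type u} [CommRing A] {I : Type v}
    {𝔞 : Ideal (MvPolynomial I A)} (h𝔞 : IsMonomialIdeal 𝔞) : 𝔞 ≤ mvFloor 𝔞 := by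
  obtain ⟨E, rfl⟩ := h𝔞
  rw [Ideal.span_le]
  rintro f ⟨μ, hμ, rfl⟩
  have h1 : monomial μ (1 : A) ∈ Ideal.span ((fun μ => monomial μ (1 : A)) '' E) :=
    Ideal.subset_span ⟨μ, hμ, rfl⟩
  have h2 : monomial (suppInd μ) (1 : A) ∈
      mvFloor (Ideal.span ((fun μ => monomial μ (1 : A)) '' E)) :=
    Ideal.subset_span ⟨μ, h1, rfl⟩
  exact monomial_mem_of_le (suppInd_le μ) h2

lemma radical_eq_radical_floor {A : Type u} [CommRing A] {I : Type v}
    {𝔞 : Ideal (MvPolynomial I A)} (h𝔞 : IsMonomialIdeal 𝔞) :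
    𝔞.radical = (mvFloor 𝔞).radical := by
  refine le_antisymm (Ideal.radical_mono (le_floor h𝔞)) ?_
  calc (mvFloor 𝔞).radical ≤ 𝔞.radical.radical := Ideal.radical_mono (floor_le_radical 𝔞)
    _ = 𝔞.radical := Ideal.radical_idem 𝔞

lemma floor_le_floor {A : Type u} [CommRing A] {I : Type v}
    {𝔞 𝔟 : Ideal (MvPolynomial I A)} (h : 𝔞.radical ≤ 𝔟.radical) :
    mvFloor 𝔞 ≤ mvFloor 𝔟 := by
  rw [mvFloor, Ideal.span_le]
  rintro f ⟨μ, hμ, rfl⟩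
  have h1 : monomial (suppInd μ) (1 : A) ∈ 𝔟.radical := h (suppInd_mem_radical hμ)
  obtain ⟨n, hn⟩ := h1
  rw [monomial_pow, one_pow] at hn
  have hle : n • suppInd μ ≤ (n + 1) • suppInd μ := by
    intro i
    simp only [Finsupp.smul_apply, smul_eq_mul]
    exact Nat.mul_le_mul_right _ (Nat.le_succ n)
  have h2 : monomial ((n + 1) • suppInd μ) (1 : A) ∈ 𝔟 :=
    monomial_mem_of_le hle hn
  refine Ideal.subset_span ⟨(n + 1) • suppInd μ, h2, ?_⟩
  rw [suppInd_smul_suppInd μ (n + 1) n.succ_ne_zero]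

/-- (Lemma 2.05 b)): for monomial ideals `𝔞, 𝔟` of `A[(X_i)_{i ∈ I}]`,
`√𝔞 = √𝔟` if and only if `⌊𝔞⌋ = ⌊𝔟⌋`. -/
theorem radical_eq_radical_iff_floor_eq_floor {A : Type u} [CommRing A] {I : Type v}
    (𝔞 𝔟 : Ideal (MvPolynomial I A)) (h𝔞 : IsMonomialIdeal 𝔞) (h𝔟 : IsMonomialIdeal 𝔟) :
    𝔞.radical = 𝔟.radical ↔ mvFloor 𝔞 = mvFloor 𝔟 := by
  constructor
  · intro h
    exact le_antisymm (floor_le_floor h.le) (floor_le_floor h.ge)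
  · intro h
    rw [radical_eq_radical_floor h𝔞, radical_eq_radical_floor h𝔟, h]
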